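/- arXiv:2411.04710 — 2 statements merged into one kernel-verified Lean document; each statement's English description precedes it below -/
import Mathlib

section
/- (Differential privacy of the Laplace mechanism.) Let f be a numeric query mapping datasets to ℝ^d with finite ℓ₁ global sensitivity Δf > 0, and let ε > 0. The Laplace mechanism M_Lap(D) = f(D) + Z, where Z ∈ ℝ^d is a vector of d i.i.d. samples from the Laplace distribution Lap(Δf/ε), is (ε,0)-differentially private. -/
open MeasureTheory ENNReal

/-- Two datasets (finite multisets over a universe `U`) are adjacent under the
add/remove notion if their symmetric difference has cardinality 1. -/
def Adjacent {U : Type*} [DecidableEq U] (D D' : Multiset U) : Prop :=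
  Multiset.card ((D - D') + (D' - D)) = 1

/-- Pure `(ε,0)`-differential privacy. -/
def PureDP {U : Type*} [DecidableEq U] {R : Type*} [MeasurableSpace R]
    (M : Multiset U → Measure R) (ε : ℝ) : Prop :=
  ∀ S : Set R, MeasurableSet S → ∀ D D' : Multiset U, Adjacent D D' →
    M D S ≤ ENNReal.ofReal (Real.exp ε) * M D' S

/-- The Laplace distribution with mean 0 and scale `b`. -/
noncomputable def Lap (b : ℝ) : Measure ℝ :=
  volume.withDensity fun x => ENNReal.ofReal ((1 / (2 * b)) * Real.exp (-|x| / b))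

/-- The Laplace mechanism: output `f(D) + Z` where `Z ∈ ℝ^d` is a vector of `d`
i.i.d. samples from `Lap(Δf/ε)`. -/
noncomputable def LaplaceMechanism {U : Type*} (d : ℕ) (f : Multiset U → (Fin d → ℝ))
    (Δf ε : ℝ) (D : Multiset U) : Measure (Fin d → ℝ) :=
  (Measure.pi fun _ : Fin d => Lap (Δf / ε)).map fun z => f D + z


lemma lintegral_pi_prod : ∀ {d : ℕ} (g : Fin d → ℝ → ℝ≥0∞), (∀ i, Measurable (g i)) →
    ∫⁻ z, ∏ i, g i (z i) ∂(Measure.pi fun _ : Fin d => (volume : Measure ℝ)) =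
      ∏ i, ∫⁻ x, g i x ∂(volume : Measure ℝ) := by
  intro d
  induction d with
  | zero => intro g _; simp [Measure.pi_univ]
  | succ n ih =>
    intro g hg
    have hmp := (measurePreserving_piFinSuccAbove (fun _ : Fin (n + 1) => (volume : Measure ℝ)) 0)
    rw [← (hmp.symm (MeasurableEquiv.piFinSuccAbove (fun _ => ℝ) 0)).map_eq, lintegral_map_equiv]
    have heq : ∀ p : ℝ × (Fin n → ℝ),
        (∏ i, g i (((MeasurableEquiv.piFinSuccAbove (fun _ => ℝ) 0).symm p) i)) =
          g 0 p.1 * ∏ j, g j.succ (p.2 j) := by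
      intro p
      simp only [Fin.prod_univ_succ, MeasurableEquiv.piFinSuccAbove, MeasurableEquiv.coe_mk,
        MeasurableEquiv.symm, Equiv.symm_symm, Fin.insertNthEquiv_apply, Fin.insertNth_apply_same, ← Fin.zero_succAbove,
        Fin.insertNth_apply_succAbove]
    simp_rw [heq]
    rw [lintegral_prod_mul (f := g 0) (g := fun y : Fin n → ℝ => ∏ j, g j.succ (y j))
      (hg 0).aemeasurable
      ((Finset.measurable_prod _ fun j _ => (hg j.succ).comp (measurable_pi_apply j)).aemeasurable)]
    rw [ih (fun j => g j.succ) (fun j => hg j.succ), Fin.prod_univ_succ]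

lemma pi_withDensity {d : ℕ} (g : ℝ → ℝ≥0∞) (hg : Measurable g)
    (hfin : ∀ x, g x ≠ ∞) :
    Measure.pi (fun _ : Fin d => (volume : Measure ℝ).withDensity g) =
      (volume : Measure (Fin d → ℝ)).withDensity fun z => ∏ i, g (z i) := by
  haveI : SigmaFinite ((volume : Measure ℝ).withDensity g) :=
    SigmaFinite.withDensity_of_ne_top (ae_of_all _ hfin)
  refine Measure.pi_eq fun s hs => ?_
  rw [withDensity_apply _ (MeasurableSet.univ_pi hs),
    ← lintegral_indicator (MeasurableSet.univ_pi hs)]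
  have hind : ∀ z : Fin d → ℝ, (Set.univ.pi s).indicator (fun z => ∏ i, g (z i)) z =
      ∏ i, (s i).indicator g (z i) := by
    intro z
    by_cases hz : z ∈ Set.univ.pi s
    · rw [Set.indicator_of_mem hz]
      exact Finset.prod_congr rfl fun i _ =>
        (Set.indicator_of_mem (hz i (Set.mem_univ i)) g).symm
    · rw [Set.indicator_of_notMem hz]
      have : ∃ i, z i ∉ s i := by simpa [Set.mem_pi] using hz
      obtain ⟨i, hi⟩ := this
      exact (Finset.prod_eq_zero (Finset.mem_univ i) (Set.indicator_of_notMem hi g)).symm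
  simp_rw [hind]
  rw [volume_pi, lintegral_pi_prod (fun i => (s i).indicator g)
    (fun i => hg.indicator (hs i))]
  exact Finset.prod_congr rfl fun i _ => by
    rw [lintegral_indicator (hs i), withDensity_apply _ (hs i)]

lemma map_add_withDensity {d : ℕ} (h : (Fin d → ℝ) → ℝ≥0∞) (a : Fin d → ℝ)
    {S : Set (Fin d → ℝ)} (hS : MeasurableSet S) :
    ((volume : Measure (Fin d → ℝ)).withDensity h).map (fun z => a + z) S =
      ∫⁻ x in S, h (x - a) ∂volume := by
  rw [Measure.map_apply (measurable_const_add a) hS,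
    withDensity_apply _ (hS.preimage (measurable_const_add a)),
    ← lintegral_indicator (hS.preimage (measurable_const_add a)),
    ← lintegral_indicator hS]
  have hind : ∀ z, ((fun z => a + z) ⁻¹' S).indicator h z
      = S.indicator (fun x => h (x - a)) (a + z) := by
    intro z
    by_cases hz : a + z ∈ S <;>
      simp [Set.indicator_apply, Set.mem_preimage, hz]
  simp_rw [hind]
  exact lintegral_add_left_eq_self (S.indicator fun x => h (x - a)) a

/-- **Differential privacy of the Laplace mechanism.** If `f : D → ℝ^d` has ℓ₁
global sensitivity at most `Δf > 0` and `ε > 0`, then the Laplace mechanism with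
scale `Δf/ε` is `(ε,0)`-differentially private. -/
theorem laplace_mechanism_dp {U : Type*} [DecidableEq U] (d : ℕ)
    (f : Multiset U → (Fin d → ℝ)) (Δf ε : ℝ) (hΔ : 0 < Δf) (hε : 0 < ε)
    (hsens : ∀ D D' : Multiset U, Adjacent D D' → ∑ i, |f D i - f D' i| ≤ Δf) :
    PureDP (LaplaceMechanism d f Δf ε) ε := by
  intro S hS D D' hadj
  set b : ℝ := Δf / ε with hb_def
  have hb : 0 < b := div_pos hΔ hε
  set g : ℝ → ℝ≥0∞ := fun t => ENNReal.ofReal ((1 / (2 * b)) * Real.exp (-|t| / b)) with hg_def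
  have hgmeas : Measurable g := by
    apply Measurable.ennreal_ofReal
    fun_prop
  have hgfin : ∀ x, g x ≠ ∞ := fun x => ENNReal.ofReal_ne_top
  have hM : ∀ E : Multiset U, LaplaceMechanism d f Δf ε E S =
      ∫⁻ x in S, ∏ i, g (x i - f E i) ∂volume := by
    intro E
    have hLap : Lap (Δf / ε) = (volume : Measure ℝ).withDensity g := rfl
    rw [LaplaceMechanism, hLap, pi_withDensity g hgmeas hgfin, map_add_withDensity _ _ hS]
    refine setLIntegral_congr_fun hS (fun x _ => ?_)
    refine Finset.prod_congr rfl fun i _ => ?_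
    simp [Pi.sub_apply]
  have key : ∀ x : Fin d → ℝ, (∏ i, g (x i - f D i)) ≤
      ENNReal.ofReal (Real.exp ε) * ∏ i, g (x i - f D' i) := by
    intro x
    have hc : (0:ℝ) < 1 / (2 * b) := by positivity
    rw [hg_def]
    rw [← ENNReal.ofReal_prod_of_nonneg (fun i _ => by positivity),
      ← ENNReal.ofReal_prod_of_nonneg (fun i _ => by positivity),
      ← ENNReal.ofReal_mul (Real.exp_nonneg ε)]
    apply ENNReal.ofReal_le_ofReal
    rw [Finset.prod_mul_distrib, Finset.prod_mul_distrib, ← Real.exp_sum, ← Real.exp_sum]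
    have hsum : (∑ i, |x i - f D' i|) - ∑ i, |x i - f D i| ≤ Δf := by
      rw [← Finset.sum_sub_distrib]
      refine le_trans (Finset.sum_le_sum fun i _ => ?_) (hsens D D' hadj)
      have h := abs_sub_abs_le_abs_sub (x i - f D' i) (x i - f D i)
      have : x i - f D' i - (x i - f D i) = f D i - f D' i := by ring
      rwa [this] at h
    have hεb : Δf / b = ε := by
      rw [hb_def]
      field_simp
    have h1 : (∑ i, -|x i - f D i| / b) ≤ ε + ∑ i, -|x i - f D' i| / b := by
      have e1 : (∑ i, -|x i - f D i| / b) = -(∑ i, |x i - f D i|) / b := by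
        rw [← Finset.sum_div, ← Finset.sum_neg_distrib]
      have e2 : (∑ i, -|x i - f D' i| / b) = -(∑ i, |x i - f D' i|) / b := by
        rw [← Finset.sum_div, ← Finset.sum_neg_distrib]
      rw [e1, e2, ← hεb, ← add_div]
      exact (div_le_div_iff_of_pos_right hb).mpr (by linarith)
    calc (∏ _i : Fin d, 1 / (2 * b)) * Real.exp (∑ i, -|x i - f D i| / b)
        ≤ (∏ _i : Fin d, 1 / (2 * b)) * Real.exp (ε + ∑ i, -|x i - f D' i| / b) := by
          refine mul_le_mul_of_nonneg_left (Real.exp_le_exp.mpr h1) ?_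
          exact Finset.prod_nonneg fun i _ => le_of_lt hc
      _ = Real.exp ε * ((∏ _i : Fin d, 1 / (2 * b)) * Real.exp (∑ i, -|x i - f D' i| / b)) := by
          rw [Real.exp_add]; ring
  rw [hM D, hM D']
  have hmeas' : Measurable fun x : Fin d → ℝ => ∏ i, g (x i - f D' i) :=
    Finset.measurable_prod _ fun i _ => hgmeas.comp ((measurable_pi_apply i).sub measurable_const)
  calc ∫⁻ x in S, ∏ i, g (x i - f D i) ∂volume
      ≤ ∫⁻ x in S, ENNReal.ofReal (Real.exp ε) * ∏ i, g (x i - f D' i) ∂volume :=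
        setLIntegral_mono (hmeas'.const_mul _) fun x _ => key x
    _ = ENNReal.ofReal (Real.exp ε) * ∫⁻ x in S, ∏ i, g (x i - f D' i) ∂volume :=
        lintegral_const_mul _ hmeas'
end

section
/- (Accuracy of the Laplace mechanism.) Let f be a numeric query mapping datasets to ℝ^d with finite ℓ₁ global sensitivity Δf > 0, let ε > 0, and let M_Lap(D) = f(D) + Z with Z a vector of d i.i.d. Lap(Δf/ε) samples. Then for every dataset D and every β ∈ (0,1): P[ ‖f(D) − M_Lap(D)‖_∞ ≥ ln(d/β) · (Δf/ε) ] ≤ β. -/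
open MeasureTheory ENNReal

lemma lapDensity_measurable (b : ℝ) :
    Measurable fun x : ℝ => ENNReal.ofReal ((1 / (2 * b)) * Real.exp (-|x| / b)) :=
  (((measurable_abs.neg.div_const b).exp).const_mul _).ennreal_ofReal

lemma lap_lintegral_Ioi {b : ℝ} (hb : 0 < b) (t : ℝ) :
    ∫⁻ x in Set.Ioi t, ENNReal.ofReal ((1 / (2 * b)) * Real.exp (-x / b))
      = ENNReal.ofReal ((1 / 2) * Real.exp (-t / b)) := by
  have hb' : (0 : ℝ) < 1 / b := by positivity
  have hint : IntegrableOn (fun x => (1 / (2 * b)) * Real.exp (-x / b)) (Set.Ioi t) := by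
    have h := (exp_neg_integrableOn_Ioi t hb').const_mul (1 / (2 * b))
    refine (IntegrableOn.congr_fun h (fun x _ => ?_) measurableSet_Ioi)
    congr 1
    field_simp
  rw [← ofReal_integral_eq_lintegral_ofReal hint
    (Filter.Eventually.of_forall fun x => by positivity)]
  congr 1
  rw [MeasureTheory.integral_const_mul]
  have h2 := integral_comp_mul_left_Ioi (fun x => Real.exp (-x)) t hb'
  rw [integral_exp_neg_Ioi] at h2
  have he : ∀ x : ℝ, Real.exp (-(1 / b * x)) = Real.exp (-x / b) := fun x => by
    congr 1; field_simp
  simp only [he] at h2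
  rw [h2, smul_eq_mul]
  field_simp

lemma Lap_singleton {b : ℝ} (t : ℝ) : Lap b {t} = 0 :=
  (withDensity_absolutelyContinuous volume _) (measure_singleton t)

lemma Lap_Ici {b : ℝ} (hb : 0 < b) {t : ℝ} (ht : 0 ≤ t) :
    Lap b (Set.Ici t) = ENNReal.ofReal ((1 / 2) * Real.exp (-t / b)) := by
  rw [Lap, withDensity_apply _ measurableSet_Ici,
    Measure.restrict_congr_set (Ioi_ae_eq_Ici (a := t)).symm,
    setLIntegral_congr_fun measurableSet_Ioi
      (fun x (hx : t < x) => by rw [abs_of_pos (lt_of_le_of_lt ht hx)])]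
  exact lap_lintegral_Ioi hb t

lemma Lap_Iic {b : ℝ} (hb : 0 < b) {t : ℝ} (ht : 0 ≤ t) :
    Lap b (Set.Iic (-t)) = ENNReal.ofReal ((1 / 2) * Real.exp (-t / b)) := by
  rw [Lap, withDensity_apply _ measurableSet_Iic]
  calc ∫⁻ x in Set.Iic (-t), ENNReal.ofReal ((1 / (2 * b)) * Real.exp (-|x| / b)) ∂volume
      = ∫⁻ x in Set.Iic (-t), ENNReal.ofReal ((1 / (2 * b)) * Real.exp (-|x| / b))
          ∂(Measure.map (fun x : ℝ => -x) volume) := by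
        rw [show (fun x : ℝ => -x) = Neg.neg from rfl, Measure.map_neg_eq_self]
    _ = ∫⁻ x in (fun x : ℝ => -x) ⁻¹' Set.Iic (-t),
          ENNReal.ofReal ((1 / (2 * b)) * Real.exp (-|(-x)| / b)) ∂volume :=
        setLIntegral_map measurableSet_Iic (lapDensity_measurable b) measurable_neg
    _ = ∫⁻ x in Set.Ici t, ENNReal.ofReal ((1 / (2 * b)) * Real.exp (-|x| / b)) ∂volume := by
        have hset : (fun x : ℝ => -x) ⁻¹' Set.Iic (-t) = Set.Ici t := by
          ext x; simp
        rw [hset]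
        simp only [abs_neg]
    _ = ENNReal.ofReal ((1 / 2) * Real.exp (-t / b)) := by
        rw [← withDensity_apply _ measurableSet_Ici, ← Lap]
        exact Lap_Ici hb ht

lemma Lap_univ {b : ℝ} (hb : 0 < b) : Lap b Set.univ = 1 := by
  rw [← Set.Iic_union_Ioi (a := (0 : ℝ)),
    measure_union (Set.Iic_disjoint_Ioi le_rfl) measurableSet_Ioi,
    measure_congr (Ioi_ae_eq_Ici' (Lap_singleton 0)),
    show Set.Iic (0 : ℝ) = Set.Iic (-(0 : ℝ)) by norm_num,
    Lap_Iic hb le_rfl, Lap_Ici hb le_rfl]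
  rw [← ENNReal.ofReal_add (by positivity) (by positivity)]
  norm_num

lemma Lap_isProbability {b : ℝ} (hb : 0 < b) : IsProbabilityMeasure (Lap b) :=
  ⟨Lap_univ hb⟩

lemma Lap_tail {b : ℝ} (hb : 0 < b) {t : ℝ} (ht : 0 ≤ t) :
    Lap b {x : ℝ | t ≤ |x|} ≤ ENNReal.ofReal (Real.exp (-t / b)) := by
  have hsub : {x : ℝ | t ≤ |x|} ⊆ Set.Iic (-t) ∪ Set.Ici t := by
    intro x hx
    simp only [Set.mem_setOf_eq] at hx
    rcases le_abs.mp hx with h | h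
    · exact Or.inr h
    · exact Or.inl (by simpa using le_neg_of_le_neg (by linarith))
  calc Lap b {x : ℝ | t ≤ |x|} ≤ Lap b (Set.Iic (-t) ∪ Set.Ici t) := measure_mono hsub
    _ ≤ Lap b (Set.Iic (-t)) + Lap b (Set.Ici t) := measure_union_le _ _
    _ = ENNReal.ofReal (Real.exp (-t / b)) := by
        rw [Lap_Iic hb ht, Lap_Ici hb ht,
          ← ENNReal.ofReal_add (by positivity) (by positivity)]
        congr 1
        ring

/-- **Accuracy of the Laplace mechanism.** For every dataset `D` and every
`β ∈ (0,1)`, `P[ ‖f(D) − M_Lap(D)‖_∞ ≥ ln(d/β)·(Δf/ε) ] ≤ β`.  Here the sup-norm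
`‖·‖` on `Fin d → ℝ` is the maximal absolute value of the coordinates. -/
theorem laplace_mechanism_accuracy {U : Type*} [DecidableEq U] (d : ℕ) (hd : 0 < d)
    (f : Multiset U → (Fin d → ℝ)) (Δf ε : ℝ) (hΔ : 0 < Δf) (hε : 0 < ε)
    (hsens : ∀ D D' : Multiset U, Adjacent D D' → ∑ i, |f D i - f D' i| ≤ Δf)
    (D : Multiset U) (β : ℝ) (hβ : β ∈ Set.Ioo (0 : ℝ) 1) :
    LaplaceMechanism d f Δf ε D
        {x : Fin d → ℝ | Real.log ((d : ℝ) / β) * (Δf / ε) ≤ ‖f D - x‖} ≤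
      ENNReal.ofReal β := by
  obtain ⟨hβ0, hβ1⟩ := hβ
  set b : ℝ := Δf / ε with hbdef
  have hb : 0 < b := div_pos hΔ hε
  set t : ℝ := Real.log ((d : ℝ) / β) * b with htdef
  have hd1 : (1 : ℝ) ≤ (d : ℝ) := by exact_mod_cast hd
  have hdβ : 1 < (d : ℝ) / β := (one_lt_div hβ0).2 (lt_of_lt_of_le hβ1 hd1)
  have hlog : 0 < Real.log ((d : ℝ) / β) := Real.log_pos hdβ
  have ht : 0 < t := mul_pos hlog hb
  haveI hprob : IsProbabilityMeasure (Lap b) := Lap_isProbability hb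
  haveI : ∀ i : Fin d, SigmaFinite (Lap b) := fun _ => inferInstance
  have hmf : Measurable fun z : Fin d → ℝ => f D + z := measurable_const.add measurable_id
  have hms : MeasurableSet {x : Fin d → ℝ | t ≤ ‖f D - x‖} :=
    measurableSet_le measurable_const ((continuous_const.sub continuous_id).norm).measurable
  rw [LaplaceMechanism, Measure.map_apply hmf hms]
  have hpre : (fun z : Fin d → ℝ => f D + z) ⁻¹' {x | t ≤ ‖f D - x‖} = {z | t ≤ ‖z‖} := by
    ext z
    simp only [Set.mem_preimage, Set.mem_setOf_eq]
    rw [show f D - (f D + z) = -z by abel, norm_neg]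
  rw [hpre]
  have hsub : {z : Fin d → ℝ | t ≤ ‖z‖} ⊆
      ⋃ i : Fin d, Function.eval i ⁻¹' {x : ℝ | t ≤ |x|} := by
    intro z hz
    by_contra hcon
    simp only [Set.mem_iUnion, Set.mem_preimage, Set.mem_setOf_eq, not_exists, not_le] at hcon
    have : ‖z‖ < t := (pi_norm_lt_iff ht).2 fun i => by
      rw [Real.norm_eq_abs]; exact hcon i
    exact absurd hz (by simpa using not_le.2 this)
  have hcoord : ∀ i : Fin d,
      (Measure.pi fun _ : Fin d => Lap b) (Function.eval i ⁻¹' {x : ℝ | t ≤ |x|})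
        = Lap b {x : ℝ | t ≤ |x|} := by
    intro i
    rw [Set.eval_preimage, Measure.pi_pi]
    rw [Finset.prod_eq_single i
      (fun j _ hj => by rw [Function.update_of_ne hj]; exact measure_univ)
      (fun h => absurd (Finset.mem_univ i) h)]
    rw [Function.update_self]
  have htail : Lap b {x : ℝ | t ≤ |x|} ≤ ENNReal.ofReal (β / d) := by
    have := Lap_tail hb ht.le
    have hexp : Real.exp (-t / b) = β / d := by
      rw [htdef, show -(Real.log ((d : ℝ) / β) * b) / b = -Real.log ((d : ℝ) / β) by
        field_simp, Real.exp_neg, Real.exp_log (by positivity)]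
      rw [inv_div]
    rwa [hexp] at this
  calc (Measure.pi fun _ : Fin d => Lap b) {z : Fin d → ℝ | t ≤ ‖z‖}
      ≤ (Measure.pi fun _ : Fin d => Lap b)
          (⋃ i : Fin d, Function.eval i ⁻¹' {x : ℝ | t ≤ |x|}) := measure_mono hsub
    _ ≤ ∑' i : Fin d, (Measure.pi fun _ : Fin d => Lap b)
          (Function.eval i ⁻¹' {x : ℝ | t ≤ |x|}) := measure_iUnion_le _
    _ = ∑ i : Fin d, (Measure.pi fun _ : Fin d => Lap b)
          (Function.eval i ⁻¹' {x : ℝ | t ≤ |x|}) := tsum_fintype _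
    _ ≤ ∑ _i : Fin d, ENNReal.ofReal (β / d) := by
        refine Finset.sum_le_sum fun i _ => ?_
        rw [hcoord i]
        exact htail
    _ = ENNReal.ofReal β := by
        rw [Finset.sum_const, Finset.card_univ, Fintype.card_fin, nsmul_eq_mul,
          ← ENNReal.ofReal_natCast d, ← ENNReal.ofReal_mul (by positivity)]
        congr 1
        field_simp
end
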